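/- Let G = (X, Y, E) be a bipartite graph with maximum matching M, and let x ∈ X be matched by M. If there is no even-length alternating path (with respect to M) from x to a free vertex, then x participates in every maximum matching of G. -/

import Mathlib

open Finset

variable {α β : Type*}

/-- A matching: no two distinct edges share an X-endpoint or a Y-endpoint. -/
def IsMatching (M : Finset (α × β)) : Prop :=
  (∀ e ∈ M, ∀ f ∈ M, e.1 = f.1 → e = f) ∧ (∀ e ∈ M, ∀ f ∈ M, e.2 = f.2 → e = f)

/-- `M` is a maximum (cardinality) matching of the bipartite graph with edge set `E`. -/
def IsMaxMatching (E M : Finset (α × β)) : Prop :=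
  M ⊆ E ∧ IsMatching M ∧ ∀ M', M' ⊆ E → IsMatching M' → M'.card ≤ M.card

open Classical in
/-- μ(E): size of a maximum matching of the bipartite graph with edge set `E`. -/
noncomputable def mu (E : Finset (α × β)) : ℕ :=
  (E.powerset.filter IsMatching).sup Finset.card

/-- The X-vertex `x` is matched (participates) in `M`. -/
def Matched (M : Finset (α × β)) (x : α) : Prop := ∃ y, (x, y) ∈ M

/-- `x` participates in all maximum matchings of `(X, Y, E)` (i.e. `x ∈ Γ(E)`). -/
def InAllMax (E : Finset (α × β)) (x : α) : Prop :=
  ∀ M, IsMaxMatching E M → Matched M x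

/-- An even-length alternating path (w.r.t. `M`) from `x` to `x'`:
vertices `x = x_0, y_0, x_1, y_1, ..., x_k = x'` with `(x_i, y_i) ∈ M` and
`(x_{i+1}, y_i) ∈ E \ M`, all vertices distinct (2k edges, an even number). -/
def EvenAltPath (E M : Finset (α × β)) (x x' : α) : Prop :=
  ∃ (k : ℕ) (f : Fin (k + 1) → α) (g : Fin k → β),
    Function.Injective f ∧ Function.Injective g ∧
    f 0 = x ∧ f (Fin.last k) = x' ∧
    (∀ i : Fin k, (f i.castSucc, g i) ∈ M) ∧
    (∀ i : Fin k, (f i.succ, g i) ∈ E ∧ (f i.succ, g i) ∉ M)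

/-- An alternating chain of length `n` w.r.t. `M` and `M'` starting at `x`. -/
def ChainEx (M M' : Finset (α × β)) (x : α) (n : ℕ) : Prop :=
  ∃ (f : Fin (n + 1) → α) (g : Fin n → β),
    f 0 = x ∧ (∀ i : Fin n, (f i.castSucc, g i) ∈ M) ∧ (∀ i : Fin n, (f i.succ, g i) ∈ M')

lemma chain_f_inj {M M' : Finset (α × β)} {x : α} {n : ℕ}
    {f : Fin (n + 1) → α} {g : Fin n → β}
    (hM : IsMatching M) (hM' : IsMatching M') (hx : ¬ Matched M' x)
    (h0 : f 0 = x) (hMe : ∀ i : Fin n, (f i.castSucc, g i) ∈ M)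
    (hM'e : ∀ i : Fin n, (f i.succ, g i) ∈ M') : Function.Injective f := by
  have key : ∀ (m : ℕ) (i j : Fin (n + 1)), i.val = m → f i = f j → i = j := by
    intro m
    induction m using Nat.strong_induction_on with
    | _ m ih =>
      intro i j hi hfe
      rcases Fin.eq_zero_or_eq_succ i with rfl | ⟨i', rfl⟩
      · rcases Fin.eq_zero_or_eq_succ j with rfl | ⟨j', rfl⟩
        · rfl
        · exact absurd ⟨g j', by rw [← h0, hfe]; exact hM'e j'⟩ hx
      · rcases Fin.eq_zero_or_eq_succ j with rfl | ⟨j', rfl⟩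
        · exact absurd ⟨g i', by rw [← h0, ← hfe]; exact hM'e i'⟩ hx
        · have he : ((f i'.succ, g i') : α × β) = (f j'.succ, g j') :=
            hM'.1 _ (hM'e i') _ (hM'e j') (by simpa using hfe)
          have hg : g i' = g j' := congrArg Prod.snd he
          have he2 : ((f i'.castSucc, g i') : α × β) = (f j'.castSucc, g j') :=
            hM.2 _ (hMe i') _ (hMe j') (by simpa using hg)
          have hf2 : f i'.castSucc = f j'.castSucc := congrArg Prod.fst he2
          have : i'.castSucc = j'.castSucc := by
            apply ih i'.castSucc.val _ _ _ rfl hf2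
            have h1 : i'.castSucc.val = i'.val := rfl
            have h2 : i'.succ.val = i'.val + 1 := rfl
            omega
          have : i' = j' := Fin.castSucc_injective _ this
          rw [this]
  intro i j hfe
  exact key i.val i j rfl hfe

lemma chain_g_inj {M : Finset (α × β)} {n : ℕ}
    {f : Fin (n + 1) → α} {g : Fin n → β}
    (hM : IsMatching M) (hfin : Function.Injective f)
    (hMe : ∀ i : Fin n, (f i.castSucc, g i) ∈ M) : Function.Injective g := by
  intro i j hg
  have he : ((f i.castSucc, g i) : α × β) = (f j.castSucc, g j) :=
    hM.2 _ (hMe i) _ (hMe j) (by simpa using hg)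
  have : f i.castSucc = f j.castSucc := congrArg Prod.fst he
  exact Fin.castSucc_injective _ (hfin this)

/-- If `x` is matched by a maximum matching `M` and there is no even-length alternating path
(w.r.t. `M`) from `x` to a free vertex, then `x` participates in every maximum matching. -/
theorem stmt_13 (E M : Finset (α × β)) (hM : IsMaxMatching E M) (x : α)
    (hx : Matched M x)
    (hpath : ¬ ∃ x', ¬ Matched M x' ∧ EvenAltPath E M x x') :
    InAllMax E x := by
  classical
  intro M' hM'
  by_contra hxM'
  obtain ⟨hME, hMm, hMmax⟩ := hM
  obtain ⟨hM'E, hM'm, hM'max⟩ := hM'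
  -- there is a chain of length 0
  have h0 : ChainEx M M' x 0 :=
    ⟨fun _ => x, fun i => i.elim0, rfl, fun i => i.elim0, fun i => i.elim0⟩
  -- chains are bounded in length
  set B : ℕ := (insert x (M'.image Prod.fst)).card with hB
  have hbound : ∀ n, ChainEx M M' x n → n + 1 ≤ B := by
    intro n ⟨f, g, hf0, hMe, hM'e⟩
    have hfin : Function.Injective f := chain_f_inj hMm hM'm hxM' hf0 hMe hM'e
    have : (Finset.univ : Finset (Fin (n + 1))).card ≤ B :=
      Finset.card_le_card_of_injOn f
        (by
          intro i _
          rcases Fin.eq_zero_or_eq_succ i with rfl | ⟨i', rfl⟩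
          · rw [hf0]; exact Finset.mem_insert_self _ _
          · exact Finset.mem_insert_of_mem
              (Finset.mem_image.2 ⟨_, hM'e i', rfl⟩))
        (fun i _ j _ h => hfin h)
    simpa using this
  have hex : ∃ m, ¬ ChainEx M M' x m := by
    refine ⟨B, fun h => ?_⟩
    have := hbound B h; omega
  have hmspec : ¬ ChainEx M M' x (Nat.find hex) := Nat.find_spec hex
  have hmpos : Nat.find hex ≠ 0 := fun h => hmspec (h ▸ h0)
  obtain ⟨n, hn⟩ : ∃ n, Nat.find hex = n + 1 := ⟨Nat.find hex - 1, by omega⟩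
  rw [hn] at hmspec
  have hchain : ChainEx M M' x n := by
    by_contra h
    exact Nat.find_min hex (by omega) h
  obtain ⟨f, g, hf0, hMe, hM'e⟩ := hchain
  have hfin : Function.Injective f := chain_f_inj hMm hM'm hxM' hf0 hMe hM'e
  have hgin : Function.Injective g := chain_g_inj hMm hfin hMe
  by_cases hA : Matched M (f (Fin.last n))
  · obtain ⟨y, hy1⟩ := hA
    by_cases hB2 : ∃ x', (x', y) ∈ M'
    · -- extend the chain, contradicting maximality of m
      obtain ⟨x', hx'y⟩ := hB2
      apply hmspec
      refine ⟨Fin.snoc f x', Fin.snoc g y, ?_, ?_, ?_⟩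
      · rw [show (0 : Fin (n + 2)) = (0 : Fin (n + 1)).castSucc from rfl,
          Fin.snoc_castSucc]
        exact hf0
      · intro i
        rcases Fin.eq_castSucc_or_eq_last i with ⟨i0, rfl⟩ | rfl
        · rw [Fin.snoc_castSucc, Fin.snoc_castSucc]; exact hMe i0
        · rw [Fin.snoc_castSucc, Fin.snoc_last]; exact hy1
      · intro i
        rcases Fin.eq_castSucc_or_eq_last i with ⟨i0, rfl⟩ | rfl
        · rw [Fin.snoc_castSucc, Fin.succ_castSucc, Fin.snoc_castSucc]
          exact hM'e i0
        · rw [Fin.snoc_last, Fin.succ_last, Fin.snoc_last]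
          exact hx'y
    · -- augmenting path: build a bigger matching than M'
      set G : Fin (n + 1) → β := Fin.snoc g y with hG
      have hGval : ∀ i : Fin n, G i.castSucc = g i := fun i => Fin.snoc_castSucc ..
      have hGlast : G (Fin.last n) = y := Fin.snoc_last ..
      have hGM : ∀ j : Fin (n + 1), (f j, G j) ∈ M := by
        intro j
        rcases Fin.eq_castSucc_or_eq_last j with ⟨i0, rfl⟩ | rfl
        · rw [hGval]; exact hMe i0
        · rw [hGlast]; exact hy1
      have hGM' : ∀ j : Fin (n + 1), ∀ e ∈ M', e.2 = G j →
          ∃ i0 : Fin n, j = i0.castSucc ∧ e = (f i0.succ, g i0) := by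
        intro j e he hej
        rcases Fin.eq_castSucc_or_eq_last j with ⟨i0, rfl⟩ | rfl
        · rw [hGval] at hej
          exact ⟨i0, rfl, hM'm.2 _ he _ (hM'e i0) (by simpa using hej)⟩
        · rw [hGlast] at hej
          exact absurd ⟨e.1, by rwa [← hej, Prod.mk.eta]⟩ hB2
      have hGinj : Function.Injective G := by
        intro i j h
        rcases Fin.eq_castSucc_or_eq_last i with ⟨i0, rfl⟩ | rfl <;>
          rcases Fin.eq_castSucc_or_eq_last j with ⟨j0, rfl⟩ | rfl
        · rw [hGval, hGval] at h
          exact congrArg Fin.castSucc (hgin h)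
        · rw [hGval, hGlast] at h
          exact absurd ⟨f i0.succ, h ▸ hM'e i0⟩ hB2
        · rw [hGlast, hGval] at h
          exact absurd ⟨f j0.succ, h.symm ▸ hM'e j0⟩ hB2
        · rfl
      set Q : Finset (α × β) :=
        Finset.image (fun i : Fin n => (f i.succ, g i)) Finset.univ with hQdef
      set P : Finset (α × β) :=
        Finset.image (fun j : Fin (n + 1) => (f j, G j)) Finset.univ with hPdef
      have hQmem : ∀ e, e ∈ Q ↔ ∃ i : Fin n, e = (f i.succ, g i) := by
        intro e
        simp only [hQdef, Finset.mem_image, Finset.mem_univ, true_and, eq_comm]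
      have hPmem : ∀ e, e ∈ P ↔ ∃ j : Fin (n + 1), e = (f j, G j) := by
        intro e
        simp only [hPdef, Finset.mem_image, Finset.mem_univ, true_and, eq_comm]
      have hQsub : Q ⊆ M' := by
        intro e he
        obtain ⟨i, rfl⟩ := (hQmem e).1 he
        exact hM'e i
      have hPsubM : P ⊆ M := by
        intro e he
        obtain ⟨j, rfl⟩ := (hPmem e).1 he
        exact hGM j
      have hQcard : Q.card = n := by
        rw [hQdef, Finset.card_image_of_injective _
          (fun i j h => hgin (congrArg Prod.snd h))]
        simp
      have hPcard : P.card = n + 1 := by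
        rw [hPdef, Finset.card_image_of_injective _
          (fun i j h => hGinj (congrArg Prod.snd h))]
        simp
      set M'' : Finset (α × β) := (M' \ Q) ∪ P with hM''def
      have hdisj : Disjoint (M' \ Q) P := by
        rw [Finset.disjoint_right]
        intro e heP heMQ
        obtain ⟨heM', heQ⟩ := Finset.mem_sdiff.1 heMQ
        obtain ⟨j, rfl⟩ := (hPmem e).1 heP
        obtain ⟨i0, hj, he⟩ := hGM' j _ heM' rfl
        exact heQ ((hQmem _).2 ⟨i0, he⟩)
      have hQle : n ≤ M'.card := hQcard ▸ Finset.card_le_card hQsub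
      have hcard : M''.card = M'.card + 1 := by
        rw [hM''def, Finset.card_union_of_disjoint hdisj, Finset.card_sdiff_of_subset hQsub,
          hQcard, hPcard]
        omega
      have hsub : M'' ⊆ E := by
        intro e he
        rcases Finset.mem_union.1 he with he | he
        · exact hM'E (Finset.mem_sdiff.1 he).1
        · exact hME (hPsubM he)
      have hmatch : IsMatching M'' := by
        constructor
        · intro e he e' he' hc
          rcases Finset.mem_union.1 he with he | he <;>
            rcases Finset.mem_union.1 he' with he' | he'
          · exact hM'm.1 _ (Finset.mem_sdiff.1 he).1 _ (Finset.mem_sdiff.1 he').1 hc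
          · -- e ∈ M' \ Q, e' ∈ P
            obtain ⟨heM', heQ⟩ := Finset.mem_sdiff.1 he
            obtain ⟨j, rfl⟩ := (hPmem e').1 he'
            exfalso
            rcases Fin.eq_zero_or_eq_succ j with rfl | ⟨j0, rfl⟩
            · refine hxM' ⟨e.2, ?_⟩
              have h1 : e.1 = x := by simpa [hf0] using hc
              rw [← h1, Prod.mk.eta]; exact heM'
            · have : e = (f j0.succ, g j0) :=
                hM'm.1 _ heM' _ (hM'e j0) (by simpa using hc)
              exact heQ ((hQmem _).2 ⟨j0, this⟩)
          · obtain ⟨heM', heQ⟩ := Finset.mem_sdiff.1 he'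
            obtain ⟨j, rfl⟩ := (hPmem e).1 he
            exfalso
            rcases Fin.eq_zero_or_eq_succ j with rfl | ⟨j0, rfl⟩
            · refine hxM' ⟨e'.2, ?_⟩
              have h1 : e'.1 = x := by simpa [hf0] using hc.symm
              rw [← h1, Prod.mk.eta]; exact heM'
            · have : e' = (f j0.succ, g j0) :=
                hM'm.1 _ heM' _ (hM'e j0) (by simpa using hc.symm)
              exact heQ ((hQmem _).2 ⟨j0, this⟩)
          · obtain ⟨j, rfl⟩ := (hPmem e).1 he
            obtain ⟨j', rfl⟩ := (hPmem e').1 he'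
            have : j = j' := hfin (by simpa using hc)
            rw [this]
        · intro e he e' he' hc
          rcases Finset.mem_union.1 he with he | he <;>
            rcases Finset.mem_union.1 he' with he' | he'
          · exact hM'm.2 _ (Finset.mem_sdiff.1 he).1 _ (Finset.mem_sdiff.1 he').1 hc
          · obtain ⟨heM', heQ⟩ := Finset.mem_sdiff.1 he
            obtain ⟨j, rfl⟩ := (hPmem e').1 he'
            obtain ⟨i0, hj, he2⟩ := hGM' j _ heM' (by simpa using hc)
            exact absurd ((hQmem _).2 ⟨i0, he2⟩) heQ
          · obtain ⟨heM', heQ⟩ := Finset.mem_sdiff.1 he'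
            obtain ⟨j, rfl⟩ := (hPmem e).1 he
            obtain ⟨i0, hj, he2⟩ := hGM' j _ heM' (by simpa using hc.symm)
            exact absurd ((hQmem _).2 ⟨i0, he2⟩) heQ
          · obtain ⟨j, rfl⟩ := (hPmem e).1 he
            obtain ⟨j', rfl⟩ := (hPmem e').1 he'
            have : j = j' := hGinj (by simpa using hc)
            rw [this]
      have := hM'max M'' hsub hmatch
      omega
  · -- found an even alternating path to a free vertex
    apply hpath
    refine ⟨f (Fin.last n), hA, n, f, g, hfin, hgin, hf0, rfl, hMe, ?_⟩
    intro i
    refine ⟨hM'E (hM'e i), fun hmem => ?_⟩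
    have he : ((f i.succ, g i) : α × β) = (f i.castSucc, g i) :=
      hMm.2 _ hmem _ (hMe i) rfl
    have := hfin (congrArg Prod.fst he)
    exact Fin.ne_of_lt (Fin.castSucc_lt_succ (i := i)) this.symm
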